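/- Let G be a distance regular graph with diameter n ≥ 1, with i-th degrees k_i and adjacency matrices A_0 = I, A_1, …, A_n. If α ∈ ℝ is such that the matrix Q_α = (k_1 − α·k_n)·A_0 − A_1 + α·A_n is positive semidefinite, then c_2(G)^2 ≥ n^2 · k_n · α / k_1. -/

import Mathlib

open scoped BigOperators

/-- The least distortion `c₂(G)` of an embedding of the connected graph `G`
(with its shortest path metric) into Euclidean space. -/
noncomputable def leastDistortion {V : Type*} [Fintype V] (G : SimpleGraph V) : ℝ :=
  sInf {D : ℝ | ∃ (m : ℕ) (ρ : V → EuclideanSpace ℝ (Fin m)),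
    ∀ x y : V, (G.dist x y : ℝ) ≤ ‖ρ x - ρ y‖ ∧ ‖ρ x - ρ y‖ ≤ D * (G.dist x y : ℝ)}

/-- A connected finite graph is distance regular if there are constants
`aᵢ, bᵢ, cᵢ` such that for every pair of vertices at distance `i`, the number of
common neighbours at the prescribed distances are `aᵢ, bᵢ, cᵢ`. -/
def IsDistanceRegular {V : Type*} [Fintype V] (G : SimpleGraph V) : Prop :=
  G.Connected ∧ ∀ i : ℕ, ∃ a b c : ℕ, ∀ x y : V, G.dist x y = i →
    Nat.card {z : V // G.dist x z = 1 ∧ G.dist z y = i} = a ∧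
    Nat.card {z : V // G.dist x z = 1 ∧ G.dist z y = i + 1} = b ∧
    Nat.card {z : V // G.dist x z = 1 ∧ G.dist z y = i - 1} = c

/-- The `i`-th adjacency matrix of a graph: `(Aᵢ)_{xy} = 1` iff `d(x,y) = i`.
In particular `A₀` is the identity matrix. -/
noncomputable def distAdjMatrix {V : Type*} [Fintype V] (G : SimpleGraph V) (i : ℕ) :
    Matrix V V ℝ :=
  Matrix.of fun x y => if G.dist x y = i then (1 : ℝ) else 0

set_option maxHeartbeats 1000000 in
theorem stmt1 {V : Type*} [Fintype V] [DecidableEq V] (G : SimpleGraph V)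
    (hreg : IsDistanceRegular G) (n : ℕ) (hn : 1 ≤ n)
    (hdiam_le : ∀ x y : V, G.dist x y ≤ n) (hdiam_eq : ∃ x y : V, G.dist x y = n)
    (k : ℕ → ℕ) (hk : ∀ (i : ℕ) (x : V), Nat.card {y : V // G.dist x y = i} = k i)
    (α : ℝ)
    (hpsd : (((k 1 : ℝ) - α * (k n : ℝ)) • distAdjMatrix G 0 - distAdjMatrix G 1 +
        α • distAdjMatrix G n).PosSemidef) :
    leastDistortion G ^ 2 ≥ (n : ℝ) ^ 2 * (k n : ℝ) * α / (k 1 : ℝ) := by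
  classical
  obtain ⟨a, b, hab⟩ := hdiam_eq
  have hconn := hreg.1
  have hd0 : ∀ x y : V, G.dist x y = 0 ↔ x = y := fun x y => hconn.dist_eq_zero_iff
  have hn' : (0:ℝ) < n := by exact_mod_cast hn
  set S := {D : ℝ | ∃ (m : ℕ) (ρ : V → EuclideanSpace ℝ (Fin m)),
    ∀ x y : V, (G.dist x y : ℝ) ≤ ‖ρ x - ρ y‖ ∧ ‖ρ x - ρ y‖ ≤ D * (G.dist x y : ℝ)} with hSdef
  have hkR : ∀ (i : ℕ) (x : V), ∑ y : V, (if G.dist x y = i then (1:ℝ) else 0) = (k i : ℝ) := by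
    intro i x
    rw [Finset.sum_boole, ← hk i x, Nat.card_eq_fintype_card, Fintype.card_subtype]
  set B : ℝ := (n : ℝ) ^ 2 * (k n : ℝ) * α / (k 1 : ℝ) with hBdef
  -- key inequality for every admissible distortion D
  have key : ∀ D ∈ S, 0 < D ∧ B ≤ D ^ 2 := by
    rintro D ⟨m, ρ, hρ⟩
    have hD : 0 < D := by
      have h1 : (n:ℝ) ≤ ‖ρ a - ρ b‖ := by
        have := (hρ a b).1; rwa [hab] at this
      have h2 : ‖ρ a - ρ b‖ ≤ D * n := by
        have := (hρ a b).2; rwa [hab] at this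
      nlinarith
    refine ⟨hD, ?_⟩
    rcases le_or_gt α 0 with hα | hα
    · have hB0 : B ≤ 0 :=
        div_nonpos_of_nonpos_of_nonneg
          (mul_nonpos_of_nonneg_of_nonpos (by positivity) hα) (by positivity)
      nlinarith [sq_nonneg D]
    rcases eq_or_lt_of_le (Nat.cast_nonneg (k 1) : (0:ℝ) ≤ (k 1 : ℝ)) with hk1 | hk1
    · rw [hBdef, ← hk1, div_zero]; positivity
    -- main case: α > 0, k 1 > 0
    set Q := (((k 1 : ℝ) - α * (k n : ℝ)) • distAdjMatrix G 0 - distAdjMatrix G 1 +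
        α • distAdjMatrix G n) with hQdef
    have hQapp : ∀ x y : V, Q x y =
        ((k 1 : ℝ) - α * (k n : ℝ)) * (if G.dist x y = 0 then (1:ℝ) else 0)
        - (if G.dist x y = 1 then (1:ℝ) else 0)
        + α * (if G.dist x y = n then (1:ℝ) else 0) := by
      intro x y
      simp [hQdef, distAdjMatrix, Matrix.sub_apply, Matrix.add_apply, Matrix.smul_apply,
        smul_eq_mul]
    have hQsymm : ∀ x y : V, Q x y = Q y x := by
      intro x y; rw [hQapp, hQapp, SimpleGraph.dist_comm]
    have h0sum : ∀ x : V, ∑ y : V, (if G.dist x y = 0 then (1:ℝ) else 0) = 1 := by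
      intro x
      have h : ∀ y : V, (G.dist x y = 0) ↔ (y = x) := fun y => (hd0 x y).trans eq_comm
      simp only [h]
      simp
    have hrow : ∀ x : V, ∑ y : V, Q x y = 0 := by
      intro x
      simp only [hQapp]
      rw [Finset.sum_add_distrib, Finset.sum_sub_distrib, ← Finset.mul_sum, ← Finset.mul_sum,
        h0sum x, hkR 1 x, hkR n x]
      ring
    have hcol : ∀ y : V, ∑ x : V, Q x y = 0 := by
      intro y
      have : ∑ x : V, Q x y = ∑ x : V, Q y x :=
        Finset.sum_congr rfl fun x _ => hQsymm x y
      rw [this, hrow y]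
    -- quadratic form nonnegativity, summed over coordinates
    have hquad : (0:ℝ) ≤ ∑ x : V, ∑ y : V, Q x y * (∑ i : Fin m, ρ x i * ρ y i) := by
      have hcoord : ∀ i : Fin m, (0:ℝ) ≤ ∑ x : V, ∑ y : V, Q x y * (ρ x i * ρ y i) := by
        intro i
        have h2 := hpsd.dotProduct_mulVec_nonneg (fun x => ρ x i)
        have heq : dotProduct (star (fun x => ρ x i)) (Q.mulVec (fun x => ρ x i))
            = ∑ x : V, ∑ y : V, Q x y * (ρ x i * ρ y i) := by
          simp only [dotProduct, Matrix.mulVec, Pi.star_apply, star_trivial]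
          refine Finset.sum_congr rfl fun x _ => ?_
          rw [Finset.mul_sum]
          exact Finset.sum_congr rfl fun y _ => by ring
        rwa [heq] at h2
      have hswap : ∑ x : V, ∑ y : V, Q x y * (∑ i : Fin m, ρ x i * ρ y i)
          = ∑ i : Fin m, ∑ x : V, ∑ y : V, Q x y * (ρ x i * ρ y i) := by
        calc ∑ x : V, ∑ y : V, Q x y * (∑ i : Fin m, ρ x i * ρ y i)
            = ∑ x : V, ∑ y : V, ∑ i : Fin m, Q x y * (ρ x i * ρ y i) := by
              refine Finset.sum_congr rfl fun x _ => Finset.sum_congr rfl fun y _ => ?_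
              rw [Finset.mul_sum]
          _ = ∑ x : V, ∑ i : Fin m, ∑ y : V, Q x y * (ρ x i * ρ y i) :=
              Finset.sum_congr rfl fun x _ => Finset.sum_comm
          _ = ∑ i : Fin m, ∑ x : V, ∑ y : V, Q x y * (ρ x i * ρ y i) := Finset.sum_comm
      rw [hswap]
      exact Finset.sum_nonneg fun i _ => hcoord i
    -- expansion of squared norms
    have hnorm : ∀ x y : V, ‖ρ x - ρ y‖^2 =
        (∑ i, ρ x i * ρ x i) + (∑ i, ρ y i * ρ y i) - 2 * ∑ i, ρ x i * ρ y i := by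
      intro x y
      rw [norm_sub_sq_real, ← real_inner_self_eq_norm_sq, ← real_inner_self_eq_norm_sq]
      simp only [PiLp.inner_apply, RCLike.inner_apply, conj_trivial]
      have hc : ∑ i, ρ y i * ρ x i = ∑ i, ρ x i * ρ y i :=
        Finset.sum_congr rfl fun i _ => mul_comm _ _
      linarith [hc]
    -- the two "diagonal" double sums vanish
    have t1 : ∑ x : V, ∑ y : V, Q x y * (∑ i, ρ x i * ρ x i) = 0 := by
      refine Finset.sum_eq_zero fun x _ => ?_
      rw [← Finset.sum_mul, hrow x, zero_mul]
    have t2 : ∑ x : V, ∑ y : V, Q x y * (∑ i, ρ y i * ρ y i) = 0 := by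
      rw [Finset.sum_comm]
      refine Finset.sum_eq_zero fun y _ => ?_
      rw [← Finset.sum_mul, hcol y, zero_mul]
    -- the Q-weighted sum of squared distances is nonpositive
    have hQnorm : ∑ x : V, ∑ y : V, Q x y * ‖ρ x - ρ y‖^2 ≤ 0 := by
      have hterm : ∀ x y : V, Q x y * ‖ρ x - ρ y‖^2 =
          Q x y * (∑ i, ρ x i * ρ x i) + Q x y * (∑ i, ρ y i * ρ y i)
          - 2 * (Q x y * (∑ i, ρ x i * ρ y i)) := fun x y => by rw [hnorm]; ring
      have hsplit : ∑ x : V, ∑ y : V, Q x y * ‖ρ x - ρ y‖^2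
          = (∑ x : V, ∑ y : V, Q x y * (∑ i, ρ x i * ρ x i))
          + (∑ x : V, ∑ y : V, Q x y * (∑ i, ρ y i * ρ y i))
          - 2 * ∑ x : V, ∑ y : V, Q x y * (∑ i, ρ x i * ρ y i) := by
        simp only [hterm, Finset.sum_sub_distrib, Finset.sum_add_distrib, ← Finset.mul_sum]
      rw [hsplit, t1, t2]
      linarith
    -- split the Q-weighted sum into the distance-1 and distance-n parts
    set F1 : ℝ := ∑ x : V, ∑ y : V, (if G.dist x y = 1 then (1:ℝ) else 0) * ‖ρ x - ρ y‖^2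
      with hF1def
    set Fn : ℝ := ∑ x : V, ∑ y : V, (if G.dist x y = n then (1:ℝ) else 0) * ‖ρ x - ρ y‖^2
      with hFndef
    have hzero : ∀ x y : V, (if G.dist x y = 0 then (1:ℝ) else 0) * ‖ρ x - ρ y‖^2 = 0 := by
      intro x y
      by_cases h : G.dist x y = 0
      · rw [if_pos h, one_mul, (hd0 x y).mp h]
        simp
      · rw [if_neg h, zero_mul]
    have hsplit2 : ∑ x : V, ∑ y : V, Q x y * ‖ρ x - ρ y‖^2 = -F1 + α * Fn := by
      have hterm : ∀ x y : V, Q x y * ‖ρ x - ρ y‖^2 =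
          -((if G.dist x y = 1 then (1:ℝ) else 0) * ‖ρ x - ρ y‖^2)
          + α * ((if G.dist x y = n then (1:ℝ) else 0) * ‖ρ x - ρ y‖^2) := by
        intro x y
        have h := hzero x y
        calc Q x y * ‖ρ x - ρ y‖^2
            = ((k 1:ℝ) - α * (k n:ℝ)) * ((if G.dist x y = 0 then (1:ℝ) else 0) * ‖ρ x - ρ y‖^2)
              - (if G.dist x y = 1 then (1:ℝ) else 0) * ‖ρ x - ρ y‖^2
              + α * ((if G.dist x y = n then (1:ℝ) else 0) * ‖ρ x - ρ y‖^2) := by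
              rw [hQapp]; ring
          _ = _ := by rw [h]; ring
      simp only [hterm, Finset.sum_add_distrib, Finset.sum_neg_distrib, ← Finset.mul_sum]
      rfl
    have hmain : α * Fn ≤ F1 := by
      rw [hsplit2] at hQnorm; linarith
    -- bounds on F1 and Fn
    have hcard : (0:ℝ) < (Fintype.card V : ℝ) := by
      have : 0 < Fintype.card V := Fintype.card_pos_iff.mpr ⟨a⟩
      exact_mod_cast this
    have hF1le : F1 ≤ (Fintype.card V : ℝ) * ((k 1 : ℝ) * D^2) := by
      have hb : ∀ x y : V, (if G.dist x y = 1 then (1:ℝ) else 0) * ‖ρ x - ρ y‖^2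
          ≤ (if G.dist x y = 1 then (1:ℝ) else 0) * D^2 := by
        intro x y
        by_cases h : G.dist x y = 1
        · rw [if_pos h, one_mul, one_mul]
          have h2 := (hρ x y).2
          rw [h] at h2
          push_cast at h2
          nlinarith [norm_nonneg (ρ x - ρ y)]
        · simp [h]
      calc F1 ≤ ∑ x : V, ∑ y : V, (if G.dist x y = 1 then (1:ℝ) else 0) * D^2 :=
            Finset.sum_le_sum fun x _ => Finset.sum_le_sum fun y _ => hb x y
        _ = ∑ _x : V, (k 1 : ℝ) * D^2 := by
            refine Finset.sum_congr rfl fun x _ => ?_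
            rw [← Finset.sum_mul, hkR 1 x]
        _ = (Fintype.card V : ℝ) * ((k 1 : ℝ) * D^2) := by
            rw [Finset.sum_const, nsmul_eq_mul, Finset.card_univ]
    have hFnge : (Fintype.card V : ℝ) * ((k n : ℝ) * (n:ℝ)^2) ≤ Fn := by
      have hb : ∀ x y : V, (if G.dist x y = n then (1:ℝ) else 0) * (n:ℝ)^2
          ≤ (if G.dist x y = n then (1:ℝ) else 0) * ‖ρ x - ρ y‖^2 := by
        intro x y
        by_cases h : G.dist x y = n
        · rw [if_pos h, one_mul, one_mul]
          have h1 := (hρ x y).1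
          rw [h] at h1
          nlinarith
        · simp [h]
      calc (Fintype.card V : ℝ) * ((k n : ℝ) * (n:ℝ)^2)
          = ∑ _x : V, (k n : ℝ) * (n:ℝ)^2 := by
            rw [Finset.sum_const, nsmul_eq_mul, Finset.card_univ]
        _ = ∑ x : V, ∑ y : V, (if G.dist x y = n then (1:ℝ) else 0) * (n:ℝ)^2 := by
            refine Finset.sum_congr rfl fun x _ => ?_
            rw [← Finset.sum_mul, hkR n x]
        _ ≤ Fn := Finset.sum_le_sum fun x _ => Finset.sum_le_sum fun y _ => hb x y
    -- conclude
    rw [hBdef, div_le_iff₀ hk1]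
    have h1 : α * ((Fintype.card V : ℝ) * ((k n : ℝ) * (n:ℝ)^2)) ≤ α * Fn :=
      mul_le_mul_of_nonneg_left hFnge hα.le
    have h2 : α * ((Fintype.card V : ℝ) * ((k n : ℝ) * (n:ℝ)^2))
        ≤ (Fintype.card V : ℝ) * ((k 1 : ℝ) * D^2) := le_trans h1 (le_trans hmain hF1le)
    nlinarith
  -- nonemptiness of S
  have hSne : S.Nonempty := by
    refine ⟨(n:ℝ) * Real.sqrt 2, Fintype.card V,
      fun x => (n:ℝ) • EuclideanSpace.single ((Fintype.equivFin V) x) (1:ℝ), ?_⟩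
    intro x y
    by_cases hxy : x = y
    · subst hxy
      simp [SimpleGraph.dist_self]
    · have hne : (Fintype.equivFin V) x ≠ (Fintype.equivFin V) y := by
        simp [hxy]
      have hsing : ‖(EuclideanSpace.single ((Fintype.equivFin V) x) (1:ℝ))
          - EuclideanSpace.single ((Fintype.equivFin V) y) 1‖ = Real.sqrt 2 := by
        rw [← Real.sqrt_sq (norm_nonneg _)]
        congr 1
        rw [norm_sub_sq_real, EuclideanSpace.norm_single, EuclideanSpace.norm_single,
          EuclideanSpace.inner_single_left, EuclideanSpace.single_apply, if_neg hne]
        norm_num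
      have hnormval : ‖(n:ℝ) • EuclideanSpace.single ((Fintype.equivFin V) x) (1:ℝ)
          - (n:ℝ) • EuclideanSpace.single ((Fintype.equivFin V) y) 1‖
          = (n:ℝ) * Real.sqrt 2 := by
        rw [← smul_sub, norm_smul, Real.norm_eq_abs, abs_of_nonneg hn'.le, hsing]
      rw [hnormval]
      have hd1 : (1:ℝ) ≤ (G.dist x y : ℝ) := by
        exact_mod_cast hconn.pos_dist_of_ne hxy
      have hdn : (G.dist x y : ℝ) ≤ (n:ℝ) := by exact_mod_cast hdiam_le x y
      have hsqrt2 : (1:ℝ) ≤ Real.sqrt 2 := by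
        rw [show (1:ℝ) = Real.sqrt 1 by simp]
        exact Real.sqrt_le_sqrt (by norm_num)
      constructor
      · nlinarith [mul_le_mul_of_nonneg_left hsqrt2 hn'.le]
      · nlinarith [mul_le_mul_of_nonneg_left hd1
          (by positivity : (0:ℝ) ≤ (n:ℝ) * Real.sqrt 2)]
  -- final computation with the infimum
  have hLd : leastDistortion G = sInf S := rfl
  rw [ge_iff_le, hLd]
  clear_value S B
  rcases le_or_gt B 0 with hB | hB
  · nlinarith [sq_nonneg (sInf S)]
  · have hlb : Real.sqrt B ≤ sInf S := by
      refine le_csInf hSne fun D hD => ?_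
      obtain ⟨hDpos, hDB⟩ := key D hD
      calc Real.sqrt B ≤ Real.sqrt (D^2) := Real.sqrt_le_sqrt hDB
        _ = D := Real.sqrt_sq hDpos.le
    nlinarith [Real.sq_sqrt hB.le, Real.sqrt_nonneg B]
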